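/- Let P be a finite partial order. Then the relation ⊑ is a partial order on the set MA(P) of maximal antichains of P, and every two maximal antichains A, B have a greatest lower bound and a least upper bound in (MA(P), ⊑); that is, (MA(P), ⊑) is a lattice. -/

import Mathlib

/-- A maximal antichain of a partial order: an antichain (w.r.t. `≤`) not properly
contained in any other antichain. -/
def MaxAntichain {α : Type*} [PartialOrder α] (A : Set α) : Prop :=
  IsAntichain (· ≤ ·) A ∧ ∀ B : Set α, IsAntichain (· ≤ ·) B → A ⊆ B → A = B

/-- The order `A ⊑ B` on maximal antichains: every element of `A` is below
some element of `B`. -/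
def MARel {α : Type*} [PartialOrder α] (A B : Set α) : Prop :=
  ∀ a ∈ A, ∃ b ∈ B, a ≤ b

section Aux

variable {α : Type*} [PartialOrder α]

/-- In an antichain, comparability implies equality. -/
lemma eq_of_le_of_mem {A : Set α} (hA : IsAntichain (· ≤ ·) A) {a a' : α}
    (ha : a ∈ A) (ha' : a' ∈ A) (h : a ≤ a') : a = a' := by
  by_contra hne
  exact hA ha ha' hne h

/-- Every element is comparable to some element of a maximal antichain. -/
lemma exists_comp {A : Set α} (hA : MaxAntichain A) (x : α) :
    ∃ a ∈ A, a ≤ x ∨ x ≤ a := by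
  by_contra h
  push_neg at h
  have hx : x ∉ A := fun hx => (h x hx).1 le_rfl
  have hanti : IsAntichain (· ≤ ·) (insert x A) := by
    intro p hp q hq hne hle
    rcases hp with rfl | hp
    · rcases hq with rfl | hq
      · exact hne rfl
      · exact (h q hq).2 hle
    · rcases hq with rfl | hq
      · exact (h p hp).1 hle
      · exact hA.1 hp hq hne hle
  have := hA.2 (insert x A) hanti (Set.subset_insert x A)
  exact hx (this ▸ Set.mem_insert x A)

/-- Criterion for being a maximal antichain. -/
lemma maxAntichain_of {M : Set α} (h1 : IsAntichain (· ≤ ·) M)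
    (h2 : ∀ x, ∃ m ∈ M, m ≤ x ∨ x ≤ m) : MaxAntichain M := by
  refine ⟨h1, fun B hB hMB => Set.Subset.antisymm hMB fun x hx => ?_⟩
  obtain ⟨m, hm, hcomp⟩ := h2 x
  by_cases heq : m = x
  · exact heq ▸ hm
  rcases hcomp with h | h
  · exact absurd h (hB (hMB hm) hx heq)
  · exact absurd h (hB hx (hMB hm) fun e => heq e.symm)

/-- For maximal antichains the relation can be stated dually. -/
lemma marel_iff {A B : Set α} (hA : MaxAntichain A) (hB : MaxAntichain B) :
    MARel A B ↔ ∀ b ∈ B, ∃ a ∈ A, a ≤ b := by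
  constructor
  · intro h b hb
    obtain ⟨a, ha, hcomp⟩ := exists_comp hA b
    rcases hcomp with hab | hba
    · exact ⟨a, ha, hab⟩
    · obtain ⟨b', hb', hab'⟩ := h a ha
      have hbb' : b = b' := eq_of_le_of_mem hB.1 hb hb' (hba.trans hab')
      exact ⟨a, ha, hbb' ▸ hab'⟩
  · intro h a ha
    obtain ⟨b, hb, hcomp⟩ := exists_comp hB a
    rcases hcomp with hba | hab
    · obtain ⟨a', ha', ha'b⟩ := h b hb
      have : a' = a := eq_of_le_of_mem hA.1 ha' ha (ha'b.trans hba)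
      exact ⟨b, hb, this ▸ ha'b⟩
    · exact ⟨b, hb, hab⟩

variable [Fintype α]

/-- Existence of the meet of two maximal antichains. -/
lemma meet_exists {A B : Set α} (hA : MaxAntichain A) (hB : MaxAntichain B) :
    ∃ M : Set α, MaxAntichain M ∧ MARel M A ∧ MARel M B ∧
      ∀ C : Set α, MaxAntichain C → MARel C A → MARel C B → MARel C M := by
  set D : Set α := {x | (∃ a ∈ A, x ≤ a) ∧ ∃ b ∈ B, x ≤ b} with hD
  set M : Set α := {m | Maximal (· ∈ D) m} with hM
  have hDmax : ∀ x ∈ D, ∃ m ∈ M, x ≤ m := by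
    intro x hx
    obtain ⟨m, hxm, hmax⟩ := Finite.exists_le_maximal hx
    exact ⟨m, hmax, hxm⟩
  -- members of A that lie in D are maximal in D
  have hAmem : ∀ a ∈ A, a ∈ D → a ∈ M := by
    intro a ha haD
    refine ⟨haD, fun d hd hle => ?_⟩
    obtain ⟨a', ha', hda'⟩ := hd.1
    have : a = a' := eq_of_le_of_mem hA.1 ha ha' (hle.trans hda')
    exact this ▸ hda'
  have hBmem : ∀ b ∈ B, b ∈ D → b ∈ M := by
    intro b hb hbD
    refine ⟨hbD, fun d hd hle => ?_⟩
    obtain ⟨b', hb', hdb'⟩ := hd.2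
    have : b = b' := eq_of_le_of_mem hB.1 hb hb' (hle.trans hdb')
    exact this ▸ hdb'
  -- the key step : for every x there is an element of M comparable to it
  have hcomp : ∀ x, ∃ m ∈ M, m ≤ x ∨ x ≤ m := by
    intro x
    by_cases hxD : x ∈ D
    · obtain ⟨m, hm, hxm⟩ := hDmax x hxD
      exact ⟨m, hm, Or.inr hxm⟩
    · have hnot : (¬ ∃ a ∈ A, x ≤ a) ∨ ¬ ∃ b ∈ B, x ≤ b := by
        by_contra hcon
        push_neg at hcon
        exact hxD ⟨hcon.1, hcon.2⟩
      rcases hnot with hno | hno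
      · -- x is not below A; get a ∈ A with a ≤ x
        obtain ⟨a, ha, hc⟩ := exists_comp hA x
        have hax : a ≤ x := hc.resolve_right fun h' => hno ⟨a, ha, h'⟩
        by_cases hb : ∃ b ∈ B, a ≤ b
        · exact ⟨a, hAmem a ha ⟨⟨a, ha, le_rfl⟩, hb⟩, Or.inl hax⟩
        · obtain ⟨b, hbB, hcb⟩ := exists_comp hB a
          have hba : b ≤ a := hcb.resolve_right fun h' => hb ⟨b, hbB, h'⟩
          exact ⟨b, hBmem b hbB ⟨⟨a, ha, hba⟩, ⟨b, hbB, le_rfl⟩⟩,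
            Or.inl (hba.trans hax)⟩
      · obtain ⟨b, hb, hc⟩ := exists_comp hB x
        have hbx : b ≤ x := hc.resolve_right fun h' => hno ⟨b, hb, h'⟩
        by_cases ha : ∃ a ∈ A, b ≤ a
        · exact ⟨b, hBmem b hb ⟨ha, ⟨b, hb, le_rfl⟩⟩, Or.inl hbx⟩
        · obtain ⟨a, haA, hca⟩ := exists_comp hA b
          have hab : a ≤ b := hca.resolve_right fun h' => ha ⟨a, haA, h'⟩
          exact ⟨a, hAmem a haA ⟨⟨a, haA, le_rfl⟩, ⟨b, hb, hab⟩⟩,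
            Or.inl (hab.trans hbx)⟩
  have hManti : IsAntichain (· ≤ ·) M := by
    intro m1 h1 m2 h2 hne hle
    exact hne (le_antisymm hle (h1.2 h2.1 hle))
  refine ⟨M, maxAntichain_of hManti hcomp, fun m hm => hm.1.1, fun m hm => hm.1.2,
    fun C hC hCA hCB c hc => ?_⟩
  obtain ⟨a, ha, h1⟩ := hCA c hc
  obtain ⟨b, hb, h2⟩ := hCB c hc
  exact hDmax c ⟨⟨a, ha, h1⟩, ⟨b, hb, h2⟩⟩

/-- Existence of the join of two maximal antichains. -/
lemma join_exists {A B : Set α} (hA : MaxAntichain A) (hB : MaxAntichain B) :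
    ∃ J : Set α, MaxAntichain J ∧ MARel A J ∧ MARel B J ∧
      ∀ C : Set α, MaxAntichain C → MARel A C → MARel B C → MARel J C := by
  set U : Set α := {x | (∃ a ∈ A, a ≤ x) ∧ ∃ b ∈ B, b ≤ x} with hU
  set J : Set α := {j | Minimal (· ∈ U) j} with hJdef
  have hUmin : ∀ x ∈ U, ∃ j ∈ J, j ≤ x := by
    intro x hx
    obtain ⟨j, hjx, hmin⟩ := exists_minimal_le_of_wellFoundedLT _ _ hx
    exact ⟨j, hmin, hjx⟩
  have hAmem : ∀ a ∈ A, a ∈ U → a ∈ J := by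
    intro a ha haU
    refine ⟨haU, fun d hd hle => ?_⟩
    obtain ⟨a', ha', ha'd⟩ := hd.1
    have : a' = a := eq_of_le_of_mem hA.1 ha' ha (ha'd.trans hle)
    exact this ▸ ha'd
  have hBmem : ∀ b ∈ B, b ∈ U → b ∈ J := by
    intro b hb hbU
    refine ⟨hbU, fun d hd hle => ?_⟩
    obtain ⟨b', hb', hb'd⟩ := hd.2
    have : b' = b := eq_of_le_of_mem hB.1 hb' hb (hb'd.trans hle)
    exact this ▸ hb'd
  have hcomp : ∀ x, ∃ j ∈ J, j ≤ x ∨ x ≤ j := by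
    intro x
    by_cases hxU : x ∈ U
    · obtain ⟨j, hj, hjx⟩ := hUmin x hxU
      exact ⟨j, hj, Or.inl hjx⟩
    · have hnot : (¬ ∃ a ∈ A, a ≤ x) ∨ ¬ ∃ b ∈ B, b ≤ x := by
        by_contra hcon
        push_neg at hcon
        exact hxU ⟨hcon.1, hcon.2⟩
      rcases hnot with hno | hno
      · obtain ⟨a, ha, hc⟩ := exists_comp hA x
        have hxa : x ≤ a := hc.resolve_left fun h' => hno ⟨a, ha, h'⟩
        by_cases hb : ∃ b ∈ B, b ≤ a
        · exact ⟨a, hAmem a ha ⟨⟨a, ha, le_rfl⟩, hb⟩, Or.inr hxa⟩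
        · obtain ⟨b, hbB, hcb⟩ := exists_comp hB a
          have hab : a ≤ b := hcb.resolve_left fun h' => hb ⟨b, hbB, h'⟩
          exact ⟨b, hBmem b hbB ⟨⟨a, ha, hab⟩, ⟨b, hbB, le_rfl⟩⟩,
            Or.inr (hxa.trans hab)⟩
      · obtain ⟨b, hb, hc⟩ := exists_comp hB x
        have hxb : x ≤ b := hc.resolve_left fun h' => hno ⟨b, hb, h'⟩
        by_cases ha : ∃ a ∈ A, a ≤ b
        · exact ⟨b, hBmem b hb ⟨ha, ⟨b, hb, le_rfl⟩⟩, Or.inr hxb⟩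
        · obtain ⟨a, haA, hca⟩ := exists_comp hA b
          have hba : b ≤ a := hca.resolve_left fun h' => ha ⟨a, haA, h'⟩
          exact ⟨a, hAmem a haA ⟨⟨a, haA, le_rfl⟩, ⟨b, hb, hba⟩⟩,
            Or.inr (hxb.trans hba)⟩
  have hJanti : IsAntichain (· ≤ ·) J := by
    intro j1 h1 j2 h2 hne hle
    exact hne (le_antisymm hle (h2.2 h1.1 hle))
  have hJ : MaxAntichain J := maxAntichain_of hJanti hcomp
  have hAJ : MARel A J := by
    intro a ha
    obtain ⟨j, hj, hc⟩ := exists_comp hJ a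
    rcases hc with hja | haj
    · obtain ⟨a', ha', ha'j⟩ := hj.1.1
      have : a' = a := eq_of_le_of_mem hA.1 ha' ha (ha'j.trans hja)
      exact ⟨j, hj, this ▸ ha'j⟩
    · exact ⟨j, hj, haj⟩
  have hBJ : MARel B J := by
    intro b hb
    obtain ⟨j, hj, hc⟩ := exists_comp hJ b
    rcases hc with hjb | hbj
    · obtain ⟨b', hb', hb'j⟩ := hj.1.2
      have : b' = b := eq_of_le_of_mem hB.1 hb' hb (hb'j.trans hjb)
      exact ⟨j, hj, this ▸ hb'j⟩
    · exact ⟨j, hj, hbj⟩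
  refine ⟨J, hJ, hAJ, hBJ, fun C hC hAC hBC j hj => ?_⟩
  obtain ⟨c, hc, hcomp'⟩ := exists_comp hC j
  rcases hcomp' with hcj | hjc
  · obtain ⟨a, ha, hac⟩ := (marel_iff hA hC).1 hAC c hc
    obtain ⟨b, hb, hbc⟩ := (marel_iff hB hC).1 hBC c hc
    have hcU : c ∈ U := ⟨⟨a, ha, hac⟩, ⟨b, hb, hbc⟩⟩
    exact ⟨c, hc, hj.2 hcU hcj⟩
  · exact ⟨c, hc, hjc⟩

end Aux

/-- `⊑` is a partial order on the set of maximal antichains, and any two maximal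
antichains have a greatest lower bound and a least upper bound: `(MA(P), ⊑)` is a
lattice. -/
theorem stmt6 {α : Type*} [Fintype α] [PartialOrder α] :
    (∀ A : Set α, MaxAntichain A → MARel A A) ∧
    (∀ A B : Set α, MaxAntichain A → MaxAntichain B → MARel A B → MARel B A → A = B) ∧
    (∀ A B C : Set α, MaxAntichain A → MaxAntichain B → MaxAntichain C →
      MARel A B → MARel B C → MARel A C) ∧
    (∀ A B : Set α, MaxAntichain A → MaxAntichain B →
      (∃ M : Set α, MaxAntichain M ∧ MARel M A ∧ MARel M B ∧
        ∀ C : Set α, MaxAntichain C → MARel C A → MARel C B → MARel C M) ∧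
      (∃ J : Set α, MaxAntichain J ∧ MARel A J ∧ MARel B J ∧
        ∀ C : Set α, MaxAntichain C → MARel A C → MARel B C → MARel J C)) := by
  refine ⟨fun A _ a ha => ⟨a, ha, le_rfl⟩, ?_, ?_, fun A B hA hB =>
    ⟨meet_exists hA hB, join_exists hA hB⟩⟩
  · intro A B hA hB hAB hBA
    apply Set.Subset.antisymm
    · intro a ha
      obtain ⟨b, hb, hab⟩ := hAB a ha
      obtain ⟨a', ha', hba'⟩ := hBA b hb
      have h1 : a = a' := eq_of_le_of_mem hA.1 ha ha' (hab.trans hba')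
      have : a = b := le_antisymm hab (h1 ▸ hba')
      exact this ▸ hb
    · intro b hb
      obtain ⟨a, ha, hba⟩ := hBA b hb
      obtain ⟨b', hb', hab'⟩ := hAB a ha
      have h1 : b = b' := eq_of_le_of_mem hB.1 hb hb' (hba.trans hab')
      have : b = a := le_antisymm hba (h1 ▸ hab')
      exact this ▸ ha
  · intro A B C _ _ _ hAB hBC a ha
    obtain ⟨b, hb, h1⟩ := hAB a ha
    obtain ⟨c, hc, h2⟩ := hBC b hb
    exact ⟨c, hc, h1.trans h2⟩
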